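/- Inversion of the copy model: Let P⁽¹⁾, P⁽²⁾ be probability distributions on K classes with Σ_y P⁽¹⁾(y)² < 1, and let a target value EC ≥ 0 be given. Define p_copy = EC · (1 − Σ_y P⁽¹⁾(y)·P⁽²⁾(y))/(1 − Σ_y P⁽¹⁾(y)²) and P̃⁽²⁾(y) = (P⁽²⁾(y) − p_copy·P⁽¹⁾(y))/(1 − p_copy). If p_copy < 1 and P̃⁽²⁾(y) ≥ 0 for all y, then P̃⁽²⁾ is a probability distribution (its values sum to 1), the copy model with parameter p_copy and underlying marginals P̃⁽¹⁾ = P⁽¹⁾ and P̃⁽²⁾ has observed marginals exactly P⁽¹⁾ and P⁽²⁾, and its Cohen's κ equals EC. -/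

import Mathlib

open Finset

/-- The joint distribution of the copy model. -/
noncomputable def copyJoint {K : ℕ} (pc : ℝ) (P1 P2 : Fin K → ℝ) (y₁ y₂ : Fin K) : ℝ :=
  P1 y₁ * (pc * (if y₁ = y₂ then (1 : ℝ) else 0) + (1 - pc) * P2 y₂)

/-- Cohen's κ as a function of the observed and expected agreement. -/
noncomputable def cohenKappa (pobs pexp : ℝ) : ℝ := (pobs - pexp) / (1 - pexp)

/-- **Inversion of the copy model.** Given target observed marginals
`P1`, `P2` with `∑ y, P1 y ^ 2 < 1` and a target value `EC ≥ 0`, define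
`pc = EC * (1 - ∑ P1 P2) / (1 - ∑ P1²)` and `Qt2 y = (P2 y - pc * P1 y) / (1 - pc)`.
If `pc < 1` and `Qt2` is nonnegative, then `Qt2` is a probability distribution, the copy
model with parameter `pc` and underlying marginals `P1`, `Qt2` has observed marginals
exactly `P1` and `P2`, and its Cohen's κ equals `EC`. -/
theorem copyModel_inversion (K : ℕ) (P1 P2 : Fin K → ℝ)
    (hP1 : ∀ y, 0 ≤ P1 y) (hP1sum : ∑ y, P1 y = 1)
    (hP2 : ∀ y, 0 ≤ P2 y) (hP2sum : ∑ y, P2 y = 1)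
    (EC : ℝ) (hEC : 0 ≤ EC)
    (hP1sq : ∑ y, P1 y ^ 2 < 1)
    (pc : ℝ)
    (hpc : pc = EC * ((1 - ∑ y, P1 y * P2 y) / (1 - ∑ y, P1 y ^ 2)))
    (Qt2 : Fin K → ℝ)
    (hQt2 : ∀ y, Qt2 y = (P2 y - pc * P1 y) / (1 - pc))
    (hpclt : pc < 1) (hQt2nonneg : ∀ y, 0 ≤ Qt2 y) :
    (∑ y, Qt2 y = 1) ∧
    (∀ y, ∑ y₂, copyJoint pc P1 Qt2 y y₂ = P1 y) ∧
    (∀ y, ∑ y₁, copyJoint pc P1 Qt2 y₁ y = P2 y) ∧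
    cohenKappa (∑ y, copyJoint pc P1 Qt2 y y) (∑ y, P1 y * P2 y) = EC := by
  have hne : (1 : ℝ) - pc ≠ 0 := by linarith
  -- Qt2 sums to 1
  have hQsum : ∑ y, Qt2 y = 1 := by
    have : ∑ y, Qt2 y = (∑ y, (P2 y - pc * P1 y)) / (1 - pc) := by
      rw [Finset.sum_div]; exact Finset.sum_congr rfl fun y _ => hQt2 y
    rw [this, Finset.sum_sub_distrib, ← Finset.mul_sum, hP1sum, hP2sum]
    field_simp
  -- key identity
  have hkey : ∀ y, (1 - pc) * Qt2 y = P2 y - pc * P1 y := by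
    intro y; rw [hQt2 y]; field_simp
  refine ⟨hQsum, ?_, ?_, ?_⟩
  · intro y
    have : ∑ y₂, copyJoint pc P1 Qt2 y y₂
        = P1 y * (pc * (∑ y₂, if y = y₂ then (1:ℝ) else 0) + (1 - pc) * ∑ y₂, Qt2 y₂) := by
      rw [Finset.mul_sum (a := pc), Finset.mul_sum (a := 1 - pc), ← Finset.sum_add_distrib,
        Finset.mul_sum]
      rfl
    rw [this, hQsum, Finset.sum_ite_eq (Finset.univ) y (fun _ => (1:ℝ))]
    simp
  · intro y
    have h1 : ∑ y₁, copyJoint pc P1 Qt2 y₁ y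
        = pc * (∑ y₁, if y₁ = y then P1 y₁ else 0) + (1 - pc) * Qt2 y * ∑ y₁, P1 y₁ := by
      rw [Finset.mul_sum, Finset.mul_sum, ← Finset.sum_add_distrib]
      refine Finset.sum_congr rfl fun y₁ _ => ?_
      simp only [copyJoint]
      split <;> ring
    rw [h1, hP1sum, Finset.sum_ite_eq' Finset.univ y P1]
    simp only [Finset.mem_univ, if_pos]
    have := hkey y
    linarith
  · -- kappa
    have hobs : ∑ y, copyJoint pc P1 Qt2 y y
        = pc * (1 - ∑ y, P1 y ^ 2) + ∑ y, P1 y * P2 y := by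
      have : ∀ y, copyJoint pc P1 Qt2 y y = pc * P1 y + P1 y * P2 y - pc * P1 y ^ 2 := by
        intro y
        simp only [copyJoint, if_pos rfl, if_true]
        linear_combination P1 y * hkey y
      rw [Finset.sum_congr rfl (fun y _ => this y)]
      rw [Finset.sum_sub_distrib, Finset.sum_add_distrib, ← Finset.mul_sum, ← Finset.mul_sum,
        hP1sum]
      ring
    -- ∑ P1 P2 < 1 via Cauchy-Schwarz
    have hP2sq : ∑ y, P2 y ^ 2 ≤ 1 := by
      calc ∑ y, P2 y ^ 2 ≤ ∑ y, P2 y := by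
            refine Finset.sum_le_sum fun y _ => ?_
            have h1 : P2 y ≤ 1 := by
              have := Finset.single_le_sum (f := P2) (fun i _ => hP2 i) (Finset.mem_univ y)
              linarith
            nlinarith [hP2 y]
        _ = 1 := hP2sum
    have hcs2 : (∑ y, P1 y * P2 y) ^ 2 ≤ (∑ y, P1 y ^ 2) * (∑ y, P2 y ^ 2) := by
      have := Finset.sum_mul_sq_le_sq_mul_sq Finset.univ P1 P2
      simpa [mul_pow] using this
    have hsq1 : (0:ℝ) ≤ ∑ y, P1 y ^ 2 :=
      Finset.sum_nonneg fun y _ => sq_nonneg _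
    have hsq2 : (0:ℝ) ≤ ∑ y, P2 y ^ 2 :=
      Finset.sum_nonneg fun y _ => sq_nonneg _
    have hPP : ∑ y, P1 y * P2 y < 1 := by
      nlinarith
    have h1 : (1 : ℝ) - ∑ y, P1 y * P2 y ≠ 0 := by linarith
    have h2 : (1 : ℝ) - ∑ y, P1 y ^ 2 ≠ 0 := by linarith
    rw [cohenKappa, hobs, hpc]
    field_simp
    ring
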